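/- Let $g \ge 1$ and let $G$ be a group containing elements $c_1,\dots,c_{2g+1}$ satisfying the braid relations. Set $\bar d_j = c_{j+1}^{-1} c_j c_{j+1}$ and $f_j = (c_{j-1} c_{j+1})^{-1} \bar d_j (c_{j-1} c_{j+1})$, with the convention $c_0 = 1$. Then the sequence $(c_1, c_2, \dots, c_{2g+1}, c_1, c_2, \dots, c_{2g+1})$ of length $4g+2$ is Hurwitz equivalent to the sequence $(c_1, c_1, c_3, c_3, c_5, c_5, \dots, c_{2g+1}, c_{2g+1}, f_2, f_4, \dots, f_{2g}, \bar d_2, \bar d_4, \dots, \bar d_{2g})$. -/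

import Mathlib

/-- One elementary (Hurwitz) transformation of sequences in a group. -/
def HurwitzStep {G : Type*} [Group G] (s t : List G) : Prop :=
  ∃ (l₁ l₂ : List G) (x y : G),
    (s = l₁ ++ x :: y :: l₂ ∧ t = l₁ ++ (x * y * x⁻¹) :: x :: l₂) ∨
    (s = l₁ ++ x :: y :: l₂ ∧ t = l₁ ++ y :: (y⁻¹ * x * y) :: l₂)

/-- Hurwitz equivalence: finitely many elementary transformations. -/
def HurwitzEquiv {G : Type*} [Group G] : List G → List G → Prop :=
  Relation.ReflTransGen HurwitzStep

/-- The sequence `a m, a (m+1), …, a k` (ascending indices). -/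
def seqAsc {G : Type*} (a : ℕ → G) (m k : ℕ) : List G :=
  (List.range (k + 1 - m)).map fun i => a (m + i)

section Basics
variable {G : Type*} [Group G]

lemma hstep_left (l₁ l₂ : List G) (x y : G) :
    HurwitzStep (l₁ ++ x :: y :: l₂) (l₁ ++ (x * y * x⁻¹) :: x :: l₂) :=
  ⟨l₁, l₂, x, y, Or.inl ⟨rfl, rfl⟩⟩

lemma hstep_right (l₁ l₂ : List G) (x y : G) :
    HurwitzStep (l₁ ++ x :: y :: l₂) (l₁ ++ y :: (y⁻¹ * x * y) :: l₂) :=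
  ⟨l₁, l₂, x, y, Or.inr ⟨rfl, rfl⟩⟩

lemma HurwitzEquiv.refl (s : List G) : HurwitzEquiv s s := Relation.ReflTransGen.refl

lemma HurwitzEquiv.trans {s t u : List G} (h : HurwitzEquiv s t) (h' : HurwitzEquiv t u) :
    HurwitzEquiv s u := Relation.ReflTransGen.trans h h'

lemma HurwitzStep.congr {s t : List G} (l r : List G) (h : HurwitzStep s t) :
    HurwitzStep (l ++ s ++ r) (l ++ t ++ r) := by
  obtain ⟨l₁, l₂, x, y, h | h⟩ := h
  · exact ⟨l ++ l₁, l₂ ++ r, x, y, Or.inl ⟨by simp [h.1], by simp [h.2]⟩⟩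
  · exact ⟨l ++ l₁, l₂ ++ r, x, y, Or.inr ⟨by simp [h.1], by simp [h.2]⟩⟩

lemma HurwitzEquiv.congr {s t : List G} (l r : List G) (h : HurwitzEquiv s t) :
    HurwitzEquiv (l ++ s ++ r) (l ++ t ++ r) :=
  Relation.ReflTransGen.lift (fun u => l ++ u ++ r) (fun _ _ (h : HurwitzStep _ _) => h.congr l r) _ _ h

lemma hequiv_swap (l₁ l₂ : List G) {x y : G} (h : x * y = y * x) :
    HurwitzEquiv (l₁ ++ x :: y :: l₂) (l₁ ++ y :: x :: l₂) := by
  have := hstep_left l₁ l₂ x y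
  rw [show x * y * x⁻¹ = y by rw [h]; group] at this
  exact Relation.ReflTransGen.single this

/-- move `x` leftwards past a list of elements commuting with it -/
lemma hequiv_moveLeft (x : G) (l r : List G) (h : ∀ a ∈ l, a * x = x * a) :
    HurwitzEquiv (l ++ x :: r) (x :: (l ++ r)) := by
  induction l with
  | nil => exact HurwitzEquiv.refl _
  | cons a l ih =>
    have h1 : HurwitzEquiv (a :: (l ++ x :: r)) (a :: (x :: (l ++ r))) := by
      simpa using (ih (fun b hb => h b (List.mem_cons_of_mem a hb))).congr [a] []
    refine h1.trans ?_
    simpa using hequiv_swap ([] : List G) (l ++ r) (h a List.mem_cons_self)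

/-- slide `x` rightwards through a block, conjugating it by the product -/
lemma hequiv_slide (x : G) (l r : List G) :
    HurwitzEquiv (x :: (l ++ r)) (l ++ (l.prod⁻¹ * x * l.prod) :: r) := by
  induction l generalizing x with
  | nil => simpa using HurwitzEquiv.refl _
  | cons a l ih =>
    have h1 : HurwitzEquiv (x :: a :: (l ++ r)) (a :: (a⁻¹ * x * a) :: (l ++ r)) :=
      Relation.ReflTransGen.single (by simpa using hstep_right ([] : List G) (l ++ r) x a)
    refine h1.trans ?_
    have h2 := (ih (a⁻¹ * x * a)).congr [a] []
    simp only [List.append_nil, List.singleton_append] at h2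
    refine h2.trans ?_
    have : l.prod⁻¹ * (a⁻¹ * x * a) * l.prod = (a :: l).prod⁻¹ * x * (a :: l).prod := by
      simp [List.prod_cons, mul_assoc]
    rw [this]
    exact HurwitzEquiv.refl _

lemma hequiv_flatten_map {α : Type*} (l : List α) (u v : α → List G)
    (h : ∀ j ∈ l, HurwitzEquiv (u j) (v j)) :
    HurwitzEquiv ((l.map u).flatten) ((l.map v).flatten) := by
  induction l with
  | nil => exact HurwitzEquiv.refl _
  | cons a l ih =>
    simp only [List.map_cons, List.flatten_cons]
    have h1 : HurwitzEquiv (u a ++ (l.map u).flatten) (u a ++ (l.map v).flatten) := by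
      simpa using (ih (fun j hj => h j (List.mem_cons_of_mem a hj))).congr (u a) []
    refine h1.trans ?_
    simpa using (h a List.mem_cons_self).congr [] ((l.map v).flatten)

lemma hequiv_of_perm {l l' : List G} (hp : l.Perm l')
    (hc : ∀ x ∈ l, ∀ y ∈ l, x * y = y * x) : HurwitzEquiv l l' := by
  induction hp with
  | nil => exact HurwitzEquiv.refl _
  | cons a p ih =>
    have := ih (fun x hx y hy => hc x (List.mem_cons_of_mem a hx) y (List.mem_cons_of_mem a hy))
    simpa using this.congr [a] []
  | swap x y l =>
    simpa using hequiv_swap ([] : List G) l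
      (hc y (by simp) x (by simp))
  | trans p q ihp ihq =>
    exact (ihp hc).trans (ihq (fun x hx y hy => hc x (p.mem_iff.mpr hx) y (p.mem_iff.mpr hy)))

/-- sliding a whole block `ds` rightwards through `A`. -/
lemma hequiv_slide_block (A : List G) : ∀ (ds r : List G),
    HurwitzEquiv (ds ++ (A ++ r)) (A ++ ((ds.map fun x => A.prod⁻¹ * x * A.prod) ++ r)) := by
  intro ds
  induction ds with
  | nil => intro r; simp; exact HurwitzEquiv.refl _
  | cons x ds ih =>
    intro r
    have h1 : HurwitzEquiv (x :: (ds ++ (A ++ r)))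
        (x :: (A ++ ((ds.map fun x => A.prod⁻¹ * x * A.prod) ++ r))) := by
      simpa using (ih r).congr [x] []
    refine h1.trans ?_
    simpa using hequiv_slide x A ((ds.map fun x => A.prod⁻¹ * x * A.prod) ++ r)

end Basics

def dd {G : Type*} [Group G] (c : ℕ → G) (j : ℕ) : G := (c (j+1))⁻¹ * c j * c (j+1)

set_option linter.unusedSectionVars false
section Spec
variable {G : Type*} [Group G]

lemma pairs_eq (f : ℕ → G) (m : ℕ) :
    (List.range (2*m)).map f = ((List.range m).map fun j => [f (2*j), f (2*j+1)]).flatten := by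
  induction m with
  | zero => simp
  | succ m ih =>
    rw [show 2*(m+1) = 2*m + 1 + 1 by ring, List.range_succ, List.range_succ,
      List.range_succ (n := m)]
    simp [ih, show 2*m+1 = 2*m+1 from rfl]

lemma seqAsc_eq (c : ℕ → G) (g : ℕ) :
    seqAsc c 1 (2*g+1) =
      c 1 :: ((List.range g).map fun j => [c (2*j+2), c (2*j+3)]).flatten := by
  rw [seqAsc, show 2*g+1+1-1 = 2*g+1 by omega, List.range_succ_eq_map, List.map_cons,
    List.map_map, pairs_eq ((fun i => c (1 + i)) ∘ Nat.succ) g]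
  congr 1
  apply congrArg List.flatten
  apply List.map_congr_left
  intro j _
  have h1 : 1 + Nat.succ (2*j) = 2*j+2 := by omega
  have h2 : 1 + Nat.succ (2*j+1) = 2*j+3 := by omega
  simp [Function.comp, h1, h2]

lemma phase1 (c : ℕ → G) (g : ℕ) :
    HurwitzEquiv (seqAsc c 1 (2*g+1))
      (c 1 :: ((List.range g).map fun j => [c (2*j+3), dd c (2*j+2)]).flatten) := by
  rw [seqAsc_eq]
  have h := hequiv_flatten_map (G := G) (List.range g)
    (fun j => [c (2*j+2), c (2*j+3)]) (fun j => [c (2*j+3), dd c (2*j+2)]) ?_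
  · simpa using h.congr [c 1] []
  · intro j _
    have := hstep_right ([] : List G) ([] : List G) (c (2*j+2)) (c (2*j+3))
    simpa [dd, HurwitzEquiv, show 2*j+2+1 = 2*j+3 by omega] using Relation.ReflTransGen.single this

end Spec

section Spec2
set_option linter.unusedSectionVars false
variable {G : Type*} [Group G]

lemma phase2 (c : ℕ → G) (g : ℕ)
    (hcomm : ∀ i j, 1 ≤ i → j ≤ 2*g+1 → i + 2 ≤ j → c i * c j = c j * c i) :
    ∀ m, m ≤ g → HurwitzEquiv
      (((List.range m).map fun j => [c (2*j+3), dd c (2*j+2)]).flatten)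
      ((((List.range m).map fun j => c (2*j+3)) ++ (List.range m).map fun j => dd c (2*j+2))) := by
  intro m
  induction m with
  | zero => intro _; exact HurwitzEquiv.refl _
  | succ m ih =>
    intro hm
    have hm' : m ≤ g := by omega
    rw [List.range_succ, List.map_append, List.map_append, List.map_append, List.flatten_append]
    simp only [List.map_cons, List.map_nil, List.flatten_cons, List.flatten_nil,
      List.append_nil]
    have h1 := (ih hm').congr ([] : List G) [c (2*m+3), dd c (2*m+2)]
    simp only [List.nil_append] at h1
    refine h1.trans ?_
    have hcm : ∀ a ∈ (List.range m).map fun j => dd c (2*j+2), a * c (2*m+3) = c (2*m+3) * a := by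
      intro a ha
      obtain ⟨j, hj, rfl⟩ := List.mem_map.mp ha
      have hj' : j < m := List.mem_range.mp hj
      have h1 : Commute (c (2*j+2)) (c (2*m+3)) :=
        hcomm (2*j+2) (2*m+3) (by omega) (by omega) (by omega)
      have h2 : Commute (c (2*j+3)) (c (2*m+3)) :=
        hcomm (2*j+3) (2*m+3) (by omega) (by omega) (by omega)
      exact ((h2.inv_left.mul_left h1).mul_left h2).eq
    have h2 := (hequiv_moveLeft (c (2*m+3)) ((List.range m).map fun j => dd c (2*j+2))
      [dd c (2*m+2)] hcm).congr ((List.range m).map fun j => c (2*j+3)) ([] : List G)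
    simp only [List.append_nil, List.append_assoc] at h2 ⊢
    exact h2

lemma conj_eq (c : ℕ → G) (g : ℕ)
    (hcomm : ∀ i j, 1 ≤ i → j ≤ 2*g+1 → i + 2 ≤ j → c i * c j = c j * c i)
    (j : ℕ) (hj : j < g) :
    (((List.range (g+1)).map fun k => c (2*k+1)).prod)⁻¹ * dd c (2*j+2) *
      ((List.range (g+1)).map fun k => c (2*k+1)).prod
    = (c (2*j+1) * c (2*j+3))⁻¹ * dd c (2*j+2) * (c (2*j+1) * c (2*j+3)) := by
  set t := g - 1 - j with ht
  set P1 := ((List.range j).map fun k => c (2*k+1)).prod with hP1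
  set P2 := ((List.range t).map fun x => c (2*(j+2+x)+1)).prod with hP2
  set Q := c (2*j+1) * c (2*j+3) with hQ
  set d := dd c (2*j+2) with hd
  have hsplit : ((List.range (g+1)).map fun k => c (2*k+1)).prod = P1 * Q * P2 := by
    rw [show g+1 = j + (2+t) by omega, List.range_add,
      show List.range (2+t) = [0,1] ++ (List.range t).map (fun x => 2+x) from by
        rw [List.range_add]; rfl]
    simp only [List.map_append, List.map_map, List.prod_append, List.map_cons, List.map_nil,
      List.prod_cons, List.prod_nil, Function.comp]
    rw [hP1, hP2, hQ]
    have e0 : 2*(j+0)+1 = 2*j+1 := by omega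
    have e1 : 2*(j+1)+1 = 2*j+3 := by omega
    rw [e0, e1]
    rw [show ((fun k => c (2*k+1)) ∘ (fun x => j + x) ∘ fun x => 2 + x)
        = (fun x => c (2*(j+2+x)+1)) from by
      funext x
      show c (2*(j+(2+x))+1) = c (2*(j+2+x)+1)
      congr 1; omega]
    group
  have hc1 : Commute d P1 := by
    apply Commute.list_prod_right
    intro x hx
    obtain ⟨k, hk, rfl⟩ := List.mem_map.mp hx
    have hk' : k < j := List.mem_range.mp hk
    have h1 : Commute (c (2*k+1)) (c (2*j+2)) :=
      hcomm (2*k+1) (2*j+2) (by omega) (by omega) (by omega)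
    have h2 : Commute (c (2*k+1)) (c (2*j+3)) :=
      hcomm (2*k+1) (2*j+3) (by omega) (by omega) (by omega)
    rw [hd]
    exact ((h2.symm.inv_left.mul_left h1.symm).mul_left h2.symm)
  have hc2 : Commute (Q⁻¹ * d * Q) P2 := by
    apply Commute.list_prod_right
    intro x hx
    obtain ⟨k, hk, rfl⟩ := List.mem_map.mp hx
    have hk' : k < t := List.mem_range.mp hk
    have h1 : Commute (c (2*j+1)) (c (2*(j+2+k)+1)) :=
      hcomm (2*j+1) (2*(j+2+k)+1) (by omega) (by omega) (by omega)
    have h2 : Commute (c (2*j+2)) (c (2*(j+2+k)+1)) :=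
      hcomm (2*j+2) (2*(j+2+k)+1) (by omega) (by omega) (by omega)
    have h3 : Commute (c (2*j+3)) (c (2*(j+2+k)+1)) :=
      hcomm (2*j+3) (2*(j+2+k)+1) (by omega) (by omega) (by omega)
    have hdk : Commute d (c (2*(j+2+k)+1)) := by
      rw [hd]
      exact (h3.inv_left.mul_left h2).mul_left h3
    have hQk : Commute Q (c (2*(j+2+k)+1)) := h1.mul_left h3
    exact (hQk.inv_left.mul_left hdk).mul_left hQk
  have e1 : P1⁻¹ * d * P1 = d := by
    rw [mul_assoc, hc1.eq, ← mul_assoc, inv_mul_cancel, one_mul]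
  have e2 : P2⁻¹ * (Q⁻¹ * d * Q) * P2 = Q⁻¹ * d * Q := by
    rw [mul_assoc, hc2.eq, ← mul_assoc, inv_mul_cancel, one_mul]
  rw [hsplit]
  have key : (P1 * Q * P2)⁻¹ * d * (P1 * Q * P2)
      = P2⁻¹ * (Q⁻¹ * (P1⁻¹ * d * P1) * Q) * P2 := by group
  rw [key, e1, e2]

lemma interleave_perm {α β : Type*} (l : List α) (a b : α → β) :
    ((l.map fun j => [a j, b j]).flatten).Perm (l.map a ++ l.map b) := by
  induction l with
  | nil => simp
  | cons x l ih =>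
    simp only [List.map_cons, List.flatten_cons, List.cons_append]
    exact (((ih.cons (b x)).trans List.perm_middle.symm).cons (a x))

end Spec2

/-- relation (15) of the paper: with `d̄ j = (c (j+1))⁻¹ * c j * c (j+1)`,
`f j = (c (j-1) * c (j+1))⁻¹ * d̄ j * (c (j-1) * c (j+1))`, and the convention `c 0 = 1`,
the sequence `(c 1, …, c (2g+1), c 1, …, c (2g+1))` is Hurwitz equivalent to
`(c 1, c 1, c 3, c 3, …, c (2g+1), c (2g+1), f 2, f 4, …, f (2g), d̄ 2, d̄ 4, …, d̄ (2g))`. -/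
theorem statement11 {G : Type*} [Group G] (g : ℕ) (hg : 1 ≤ g) (c : ℕ → G)
    (hc0 : c 0 = 1)
    (hbraid : ∀ i, 1 ≤ i → i + 1 ≤ 2 * g + 1 →
      c i * c (i + 1) * c i = c (i + 1) * c i * c (i + 1))
    (hcomm : ∀ i j, 1 ≤ i → j ≤ 2 * g + 1 → i + 2 ≤ j → c i * c j = c j * c i) :
    HurwitzEquiv (seqAsc c 1 (2 * g + 1) ++ seqAsc c 1 (2 * g + 1))
      ((((List.range (g + 1)).map fun j => [c (2 * j + 1), c (2 * j + 1)]).flatten) ++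
        ((List.range g).map fun j =>
          (c (2 * j + 1) * c (2 * j + 3))⁻¹ *
            ((c (2 * j + 3))⁻¹ * c (2 * j + 2) * c (2 * j + 3)) *
            (c (2 * j + 1) * c (2 * j + 3))) ++
        ((List.range g).map fun j =>
          (c (2 * j + 3))⁻¹ * c (2 * j + 2) * c (2 * j + 3))) := by
  have hFun : (fun j => (c (2 * j + 1) * c (2 * j + 3))⁻¹ *
      ((c (2 * j + 3))⁻¹ * c (2 * j + 2) * c (2 * j + 3)) * (c (2 * j + 1) * c (2 * j + 3)))
      = (fun j => (c (2*j+1) * c (2*j+3))⁻¹ * dd c (2*j+2) * (c (2*j+1) * c (2*j+3))) := rfl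
  have hDun : (fun j => (c (2 * j + 3))⁻¹ * c (2 * j + 2) * c (2 * j + 3))
      = (fun j => dd c (2*j+2)) := rfl
  rw [hFun, hDun]
  set A : List G := (List.range (g+1)).map fun k => c (2*k+1) with hA
  set D : List G := (List.range g).map fun j => dd c (2*j+2) with hD
  set F : List G := (List.range g).map fun j =>
    (c (2*j+1) * c (2*j+3))⁻¹ * dd c (2*j+2) * (c (2*j+1) * c (2*j+3)) with hF
  set M : List G := c 1 :: ((List.range g).map fun j => [c (2*j+3), dd c (2*j+2)]).flatten
    with hM
  -- step 1
  have h1 : HurwitzEquiv (seqAsc c 1 (2*g+1) ++ seqAsc c 1 (2*g+1)) (M ++ M) := by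
    have a1 := (phase1 c g).congr [] (seqAsc c 1 (2*g+1))
    have a2 := (phase1 c g).congr M []
    simp only [List.nil_append, List.append_nil] at a1 a2
    exact a1.trans a2
  -- step 2
  have hAeq : A = c 1 :: ((List.range g).map fun j => c (2*j+3)) := by
    rw [hA, List.range_succ_eq_map, List.map_cons, List.map_map]; rfl
  have h2one : HurwitzEquiv M (A ++ D) := by
    have := (phase2 c g hcomm g le_rfl).congr [c 1] []
    simp only [List.append_nil, List.cons_append, List.nil_append] at this
    rw [hAeq]
    simpa [hD] using this
  have h2 : HurwitzEquiv (M ++ M) ((A ++ D) ++ (A ++ D)) := by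
    have a1 := h2one.congr [] M
    have a2 := h2one.congr (A ++ D) []
    simp only [List.nil_append, List.append_nil] at a1 a2
    exact a1.trans a2
  -- step 3 : slide D through A
  have hmapF : D.map (fun x => A.prod⁻¹ * x * A.prod) = F := by
    rw [hD, hF, List.map_map]
    apply List.map_congr_left
    intro j hj
    exact conj_eq c g hcomm j (List.mem_range.mp hj)
  have h3 : HurwitzEquiv ((A ++ D) ++ (A ++ D)) (A ++ (A ++ (F ++ D))) := by
    have := (hequiv_slide_block A D D).congr A []
    simp only [List.append_nil] at this
    rw [hmapF] at this
    simpa [List.append_assoc] using this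
  -- step 4 : sort A ++ A
  have hmem : ∀ x ∈ A ++ A, ∃ k, k ≤ g ∧ x = c (2*k+1) := by
    intro x hx
    rcases List.mem_append.mp hx with hx | hx <;>
    · obtain ⟨k, hk, rfl⟩ := List.mem_map.mp hx
      have := List.mem_range.mp hk
      exact ⟨k, by omega, rfl⟩
  have hcommAA : ∀ x ∈ A ++ A, ∀ y ∈ A ++ A, x * y = y * x := by
    intro x hx y hy
    obtain ⟨k, hk, rfl⟩ := hmem x hx
    obtain ⟨m, hm, rfl⟩ := hmem y hy
    rcases lt_trichotomy k m with h | h | h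
    · exact hcomm (2*k+1) (2*m+1) (by omega) (by omega) (by omega)
    · rw [h]
    · exact (hcomm (2*m+1) (2*k+1) (by omega) (by omega) (by omega)).symm
  have hperm : (((List.range (g+1)).map fun j => [c (2*j+1), c (2*j+1)]).flatten).Perm
      (A ++ A) := by
    rw [hA]
    exact interleave_perm (List.range (g+1)) (fun j => c (2*j+1)) (fun j => c (2*j+1))
  have h4 : HurwitzEquiv (A ++ (A ++ (F ++ D)))
      ((((List.range (g+1)).map fun j => [c (2*j+1), c (2*j+1)]).flatten) ++ (F ++ D)) := by
    have := (hequiv_of_perm hperm.symm hcommAA).congr [] (F ++ D)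
    simpa [List.append_assoc] using this
  have := ((h1.trans h2).trans h3).trans h4
  simpa [List.append_assoc] using this
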